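/- Let P be an orthogonal projection and S a self-adjoint involution on a Hilbert space, and let 0 < α ≤ 1. Assume PSP ≥ αP and (1−P)S(1−P) ≤ 0. Then T := S(1−P) + PS is invertible (bounded with bounded inverse), and ‖T⁻¹‖ ≤ 1/(1 − √(1−α²)). -/

import Mathlib

open RCLike

private lemma sq_le_imp9 {X Y : ℝ} (hY : 0 ≤ Y) (hX : 0 ≤ X) (h : X^2 ≤ Y^2) : X ≤ Y := by
  nlinarith

private lemma arith9 {a b β m c α : ℝ} (ha : 0 ≤ a) (hb : 0 ≤ b) (hc : 0 ≤ c)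
    (hc1 : c ≤ 1) (hα : 0 ≤ α) (hcα : c^2 + α^2 = 1)
    (hβ1 : α*a ≤ β) (hβ2 : β ≤ a) (hm1 : 0 ≤ m) (hm2 : m ≤ c*b) :
    a^2 - (β - m)^2 ≤ c*(a^2 + b^2) := by
  have hα2 : α^2 = 1 - c^2 := by linarith
  rcases le_or_gt (c*b) (α*a) with h|h
  · have h0 : 0 ≤ α*a - c*b := by linarith
    have h1 : (α*a - c*b)^2 ≤ (β - m)^2 := by nlinarith
    have E : 0 ≤ (1-c)*a^2 + (1+c)*b^2 - 2*α*a*b := by nlinarith [sq_nonneg (α*a - (1+c)*b)]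
    have h4 : α^2*a^2 = (1-c^2)*a^2 := by rw [hα2]
    nlinarith [mul_nonneg hc E]
  · have h2 : α^2*a^2 ≤ c^2*b^2 := by nlinarith [mul_self_le_mul_self (mul_nonneg hα ha) h.le]
    have h2' : (1-c^2)*a^2 ≤ c^2*b^2 := by nlinarith [hα2]
    have h3 : 0 ≤ c*(1-c)*(a^2+b^2) :=
      mul_nonneg (mul_nonneg hc (by linarith)) (by positivity)
    nlinarith [sq_nonneg (β - m)]

section Key

variable {W : Type*} [NormedAddCommGroup W] [InnerProductSpace ℂ W] [CompleteSpace W]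

local notation "⟪" x ", " y "⟫" => @inner ℂ _ _ x y

set_option maxHeartbeats 1000000 in
private lemma key9 (P S : W →L[ℂ] W) (hP : IsSelfAdjoint P) (hP2 : P * P = P)
    (hS : IsSelfAdjoint S) (hS2 : S * S = 1)
    (α : ℝ) (hα0 : 0 < α) (hα1 : α ≤ 1)
    (h1 : (P * S * P - (α : ℂ) • P).IsPositive) (x : W) :
    (1 - Real.sqrt (1 - α ^ 2)) * ‖x‖ ≤ ‖(S * (1 - P) + P * S) x‖ ∧
    (1 - Real.sqrt (1 - α ^ 2)) * ‖x‖ ≤ ‖((1 - P) * S + S * P) x‖ := by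
  have hα2 : (0:ℝ) ≤ 1 - α^2 := by nlinarith
  set c := Real.sqrt (1 - α^2) with hcdef
  have hc0 : 0 ≤ c := Real.sqrt_nonneg _
  have hc2 : c^2 = 1 - α^2 := Real.sq_sqrt hα2
  have hc1 : c ≤ 1 := by nlinarith [sq_nonneg (c-1), sq_nonneg α]
  have hcα : c^2 + α^2 = 1 := by linarith
  have symmP : ∀ u v : W, ⟪P u, v⟫ = ⟪u, P v⟫ := fun u v => hP.isSymmetric u v
  have symmS : ∀ u v : W, ⟪S u, v⟫ = ⟪u, S v⟫ := fun u v => hS.isSymmetric u v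
  have Pidem : ∀ u : W, P (P u) = P u := fun u => by
    have := DFunLike.congr_fun hP2 u
    simpa [ContinuousLinearMap.mul_apply] using this
  have Sinv : ∀ u : W, S (S u) = u := fun u => by
    have := DFunLike.congr_fun hS2 u
    simpa [ContinuousLinearMap.mul_apply] using this
  have orth : ∀ u w : W, ⟪P u, w - P w⟫ = 0 := fun u w => by
    rw [symmP, map_sub, Pidem, sub_self, inner_zero_right]
  have orth' : ∀ u w : W, ⟪u - P u, P w⟫ = 0 := fun u w => by
    rw [← symmP, map_sub, Pidem, sub_self, inner_zero_left]
  have Siso : ∀ u : W, ‖S u‖ = ‖u‖ := fun u => by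
    have h : ‖S u‖^2 = ‖u‖^2 := by
      rw [← inner_self_eq_norm_sq (𝕜 := ℂ) (S u), ← inner_self_eq_norm_sq (𝕜 := ℂ) u,
        symmS, Sinv]
    exact le_antisymm (sq_le_imp9 (norm_nonneg _) (norm_nonneg _) h.le)
      (sq_le_imp9 (norm_nonneg _) (norm_nonneg _) h.ge)
  have pyth : ∀ u : W, ‖P u‖^2 + ‖u - P u‖^2 = ‖u‖^2 := fun u => by
    have hd : u = P u + (u - P u) := by abel
    calc ‖P u‖^2 + ‖u - P u‖^2
        = ‖P u‖^2 + 2 * re ⟪P u, u - P u⟫ + ‖u - P u‖^2 := by rw [orth]; simp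
      _ = ‖P u + (u - P u)‖^2 := (norm_add_sq (𝕜 := ℂ) _ _).symm
      _ = ‖u‖^2 := by rw [← hd]
  have hre_le : ∀ u v : W, re ⟪u, v⟫ ≤ ‖u‖ * ‖v‖ := fun u v =>
    le_trans (RCLike.re_le_norm _) (norm_inner_le_norm u v)
  have habs : ∀ u v : W, |re ⟪u, v⟫| ≤ ‖u‖ * ‖v‖ := fun u v =>
    le_trans (RCLike.abs_re_le_norm _) (norm_inner_le_norm u v)
  have hPP : ∀ u v : W, ⟪P u, P v⟫ = ⟪u, P v⟫ := fun u v => by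
    rw [symmP, Pidem]
  have hPself : ∀ u : W, ⟪P u, u⟫ = ⟪P u, P u⟫ := fun u => by
    have h0 := orth u u
    rw [inner_sub_right, sub_eq_zero] at h0
    exact h0
  have halpha : ∀ u : W, α * ‖P u‖^2 ≤ re ⟪S (P u), P u⟫ := fun u => by
    have h0 := h1.2 u
    rw [ContinuousLinearMap.reApplyInnerSelf_apply] at h0
    have e1 : (P * S * P - (α : ℂ) • P) u = P (S (P u)) - (α:ℂ) • P u := by
      simp [ContinuousLinearMap.sub_apply, ContinuousLinearMap.mul_apply]
    rw [e1, inner_sub_left, map_sub, inner_smul_left] at h0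
    have e3 : re ((starRingEnd ℂ) (α:ℂ) * (⟪P u, u⟫ : ℂ)) = α * ‖P u‖^2 := by
      rw [Complex.conj_ofReal, hPself]
      simp only [RCLike.re_to_complex, Complex.re_ofReal_mul]
      rw [show (⟪P u, P u⟫ : ℂ).re = re (⟪P u, P u⟫ : ℂ) from rfl, inner_self_eq_norm_sq]
    rw [symmP (S (P u)) u, e3] at h0
    linarith
  have hPSP_lb : ∀ u : W, α * ‖P u‖ ≤ ‖P (S (P u))‖ := fun u => by
    have h0 := halpha u
    have e : re ⟪S (P u), P u⟫ = re ⟪P (S (P u)), P u⟫ := by rw [hPP]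
    have h2 : α * ‖P u‖^2 ≤ ‖P (S (P u))‖ * ‖P u‖ := by
      calc α * ‖P u‖^2 ≤ re ⟪P (S (P u)), P u⟫ := by rw [← e]; exact h0
        _ ≤ ‖P (S (P u))‖ * ‖P u‖ := hre_le _ _
    rcases eq_or_lt_of_le (norm_nonneg (P u)) with hz|hz
    · rw [← hz, mul_zero]; exact norm_nonneg _
    · nlinarith
  have hmQ : ∀ w : W, P w = 0 → ‖P (S w)‖ ≤ c * ‖w‖ := by
    intro w hw
    rcases eq_or_lt_of_le (norm_nonneg (P (S w))) with hz|hz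
    · rw [← hz]; exact mul_nonneg hc0 (norm_nonneg _)
    · have e1 : ‖P (S w)‖^2 = re ⟪w, S (P (S w))⟫ := by
        rw [← inner_self_eq_norm_sq (𝕜 := ℂ)]
        congr 1
        calc ⟪P (S w), P (S w)⟫ = ⟪S w, P (P (S w))⟫ := symmP _ _
          _ = ⟪S w, P (S w)⟫ := by rw [Pidem]
          _ = ⟪w, S (P (S w))⟫ := symmS _ _
      have e2 : ⟪w, P (S (P (S w)))⟫ = 0 := by
        rw [← symmP, hw, inner_zero_left]
      have e3 : re ⟪w, S (P (S w))⟫ = re ⟪w, S (P (S w)) - P (S (P (S w)))⟫ := by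
        rw [inner_sub_right, map_sub, e2]
        simp
      have hp := pyth (S (P (S w)))
      rw [Siso] at hp
      have hlb := hPSP_lb (S w)
      have e4 : ‖S (P (S w)) - P (S (P (S w)))‖^2 ≤ (c * ‖P (S w)‖)^2 := by
        nlinarith [mul_self_le_mul_self (mul_nonneg hα0.le (norm_nonneg (P (S w)))) hlb]
      have e5 : ‖S (P (S w)) - P (S (P (S w)))‖ ≤ c * ‖P (S w)‖ :=
        sq_le_imp9 (mul_nonneg hc0 (norm_nonneg _)) (norm_nonneg _) e4
      have e6 : ‖P (S w)‖^2 ≤ ‖w‖ * (c * ‖P (S w)‖) := by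
        calc ‖P (S w)‖^2 = re ⟪w, S (P (S w)) - P (S (P (S w)))⟫ := by rw [e1, e3]
          _ ≤ ‖w‖ * ‖S (P (S w)) - P (S (P (S w)))‖ := hre_le _ _
          _ ≤ ‖w‖ * (c * ‖P (S w)‖) := mul_le_mul_of_nonneg_left e5 (norm_nonneg w)
      have e7 : ‖P (S w)‖ * ‖P (S w)‖ ≤ (c * ‖w‖) * ‖P (S w)‖ := by nlinarith [e6]
      exact le_of_mul_le_mul_right e7 hz
  -- now the main estimates for the fixed x
  have hq0 : P (x - P x) = 0 := by rw [map_sub, Pidem, sub_self]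
  have hab : ‖P x‖^2 + ‖x - P x‖^2 = ‖x‖^2 := pyth x
  have hβs : ‖P (S (P x))‖^2 + ‖S (P x) - P (S (P x))‖^2 = ‖P x‖^2 := by
    have := pyth (S (P x)); rwa [Siso] at this
  have hmr : ‖P (S (x - P x))‖^2 + ‖S (x - P x) - P (S (x - P x))‖^2 = ‖x - P x‖^2 := by
    have := pyth (S (x - P x)); rwa [Siso] at this
  have hβ1 : α * ‖P x‖ ≤ ‖P (S (P x))‖ := hPSP_lb x
  have hβ2 : ‖P (S (P x))‖ ≤ ‖P x‖ :=
    sq_le_imp9 (norm_nonneg _) (norm_nonneg _) (by nlinarith [sq_nonneg (‖S (P x) - P (S (P x))‖)])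
  have hm2 : ‖P (S (x - P x))‖ ≤ c * ‖x - P x‖ := hmQ _ hq0
  have hs2 : ‖S (P x) - P (S (P x))‖ ≤ c * ‖P x‖ := by
    apply sq_le_imp9 (mul_nonneg hc0 (norm_nonneg _)) (norm_nonneg _)
    nlinarith [mul_self_le_mul_self (mul_nonneg hα0.le (norm_nonneg (P x))) hβ1]
  have hr1 : α * ‖x - P x‖ ≤ ‖S (x - P x) - P (S (x - P x))‖ := by
    apply sq_le_imp9 (norm_nonneg _) (mul_nonneg hα0.le (norm_nonneg _))
    nlinarith [mul_self_le_mul_self (norm_nonneg (P (S (x - P x)))) hm2]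
  have hr2 : ‖S (x - P x) - P (S (x - P x))‖ ≤ ‖x - P x‖ :=
    sq_le_imp9 (norm_nonneg _) (norm_nonneg _)
      (by nlinarith [sq_nonneg (‖P (S (x - P x))‖)])
  -- cross terms
  have hSpq : ⟪S (P x), S (x - P x)⟫ = 0 := by
    rw [symmS, Sinv]; exact orth x x
  have hexp : ⟪S (P x), S (x - P x)⟫ =
      ⟪P (S (P x)), P (S (x - P x))⟫ +
      ⟪S (P x) - P (S (P x)), S (x - P x) - P (S (x - P x))⟫ := by
    conv_lhs => rw [show S (P x) = P (S (P x)) + (S (P x) - P (S (P x))) by abel,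
      show S (x - P x) = P (S (x - P x)) + (S (x - P x) - P (S (x - P x))) by abel]
    rw [inner_add_left, inner_add_right, inner_add_right, orth, orth']
    ring
  have hA : re ⟪S (P x) - P (S (P x)), S (x - P x) - P (S (x - P x))⟫ =
      - re ⟪P (S (P x)), P (S (x - P x))⟫ := by
    have h0 : (⟪P (S (P x)), P (S (x - P x))⟫ +
        ⟪S (P x) - P (S (P x)), S (x - P x) - P (S (x - P x))⟫ : ℂ) = 0 := by
      rw [← hexp, hSpq]
    have h0' := congrArg re h0
    rw [map_add, map_zero] at h0'
    linarith
  have hAb : |re ⟪P (S (P x)), P (S (x - P x))⟫| ≤ ‖P (S (P x))‖ * ‖P (S (x - P x))‖ := habs _ _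
  have hAb2 : |re ⟪P (S (P x)), P (S (x - P x))⟫| ≤
      ‖S (P x) - P (S (P x))‖ * ‖S (x - P x) - P (S (x - P x))‖ := by
    rw [show re ⟪P (S (P x)), P (S (x - P x))⟫ =
      - re ⟪S (P x) - P (S (P x)), S (x - P x) - P (S (x - P x))⟫ by rw [hA]; ring,
      abs_neg]
    exact habs _ _
  -- decompositions of S x
  have hSx : S x = S (P x) + S (x - P x) := by rw [← map_add]; congr 1; abel
  have hPSxd : P (S x) = P (S (P x)) + P (S (x - P x)) := by rw [hSx, map_add]
  have hQSxd : S x - P (S x) =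
      (S (P x) - P (S (P x))) + (S (x - P x) - P (S (x - P x))) := by
    rw [hPSxd, hSx]; abel
  have hPSx2 : ‖P (S x)‖^2 = ‖P (S (P x))‖^2 + ‖P (S (x - P x))‖^2
      + 2 * re ⟪P (S (P x)), P (S (x - P x))⟫ := by
    rw [hPSxd, norm_add_sq (𝕜 := ℂ)]; ring
  have hQSx2 : ‖S x - P (S x)‖^2 = ‖S (P x) - P (S (P x))‖^2
      + ‖S (x - P x) - P (S (x - P x))‖^2
      - 2 * re ⟪P (S (P x)), P (S (x - P x))⟫ := by
    rw [hQSxd, norm_add_sq (𝕜 := ℂ), hA]; ring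
  have hPy : ‖P (S x)‖^2 + ‖S x - P (S x)‖^2 = ‖x‖^2 := by
    have := pyth (S x); rwa [Siso] at this
  constructor
  · -- T side
    have harith := arith9 (norm_nonneg (P x)) (norm_nonneg (x - P x)) hc0 hc1 hα0.le hcα
      hβ1 hβ2 (norm_nonneg (P (S (x - P x)))) hm2
    have hcab : c * (‖P x‖^2 + ‖x - P x‖^2) = c * ‖x‖^2 := by rw [hab]
    have hTx : (S * (1 - P) + P * S) x = S (x - P x) + P (S x) := by
      simp [ContinuousLinearMap.add_apply, ContinuousLinearMap.mul_apply,
        ContinuousLinearMap.sub_apply, ContinuousLinearMap.one_apply]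
    have e2 : re ⟪x - P x, x⟫ = ‖x - P x‖^2 := by
      have hd : ⟪x - P x, x⟫ = ⟪x - P x, x - P x⟫ + ⟪x - P x, P x⟫ := by
        rw [← inner_add_right]; congr 1; abel
      rw [hd, orth', add_zero, inner_self_eq_norm_sq]
    have e3 : re ⟪P (S x), S x⟫ = ‖P (S x)‖^2 := by
      have hd : ⟪P (S x), S x⟫ = ⟪P (S x), P (S x)⟫ + ⟪P (S x), S x - P (S x)⟫ := by
        rw [← inner_add_right]; congr 1; abel
      rw [hd, orth, add_zero, inner_self_eq_norm_sq]
    have hTSx : re ⟪(S * (1 - P) + P * S) x, S x⟫ = ‖x - P x‖^2 + ‖P (S x)‖^2 := by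
      rw [hTx, inner_add_left, map_add]
      rw [show ⟪S (x - P x), S x⟫ = ⟪x - P x, x⟫ by rw [symmS, Sinv]]
      rw [e2, e3]
    have hform : (1 - c) * ‖x‖^2 ≤ re ⟪(S * (1 - P) + P * S) x, S x⟫ := by
      rw [hTSx]
      nlinarith [abs_le.mp hAb, hQSx2, hPy, hβs, hmr]
    have hCS : re ⟪(S * (1 - P) + P * S) x, S x⟫ ≤ ‖(S * (1 - P) + P * S) x‖ * ‖x‖ := by
      calc re ⟪(S * (1 - P) + P * S) x, S x⟫
          ≤ ‖(S * (1 - P) + P * S) x‖ * ‖S x‖ := hre_le _ _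
        _ = ‖(S * (1 - P) + P * S) x‖ * ‖x‖ := by rw [Siso]
    rcases eq_or_lt_of_le (norm_nonneg x) with hz|hz
    · rw [← hz, mul_zero]; exact norm_nonneg _
    · nlinarith
  · -- T' side
    have harith := arith9 (norm_nonneg (x - P x)) (norm_nonneg (P x)) hc0 hc1 hα0.le hcα
      hr1 hr2 (norm_nonneg (S (P x) - P (S (P x)))) hs2
    have hcab : c * (‖x - P x‖^2 + ‖P x‖^2) = c * ‖x‖^2 := by rw [add_comm, hab]
    have hT'x : ((1 - P) * S + S * P) x = (S x - P (S x)) + S (P x) := by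
      simp [ContinuousLinearMap.add_apply, ContinuousLinearMap.mul_apply,
        ContinuousLinearMap.sub_apply, ContinuousLinearMap.one_apply]
    have e2 : re ⟪P x, x⟫ = ‖P x‖^2 := by
      rw [hPself, inner_self_eq_norm_sq]
    have e3 : re ⟪S x - P (S x), S x⟫ = ‖S x - P (S x)‖^2 := by
      have hd : ⟪S x - P (S x), S x⟫ = ⟪S x - P (S x), S x - P (S x)⟫
          + ⟪S x - P (S x), P (S x)⟫ := by
        rw [← inner_add_right]; congr 1; abel
      rw [hd, orth', add_zero, inner_self_eq_norm_sq]
    have hTSx : re ⟪((1 - P) * S + S * P) x, S x⟫ = ‖S x - P (S x)‖^2 + ‖P x‖^2 := by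
      rw [hT'x, inner_add_left, map_add]
      rw [show ⟪S (P x), S x⟫ = ⟪P x, x⟫ by rw [symmS, Sinv]]
      rw [e2, e3]
    have hform : (1 - c) * ‖x‖^2 ≤ re ⟪((1 - P) * S + S * P) x, S x⟫ := by
      rw [hTSx]
      nlinarith [abs_le.mp hAb2, hPSx2, hPy, hβs, hmr]
    have hCS : re ⟪((1 - P) * S + S * P) x, S x⟫ ≤ ‖((1 - P) * S + S * P) x‖ * ‖x‖ := by
      calc re ⟪((1 - P) * S + S * P) x, S x⟫
          ≤ ‖((1 - P) * S + S * P) x‖ * ‖S x‖ := hre_le _ _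
        _ = ‖((1 - P) * S + S * P) x‖ * ‖x‖ := by rw [Siso]
    rcases eq_or_lt_of_le (norm_nonneg x) with hz|hz
    · rw [← hz, mul_zero]; exact norm_nonneg _
    · nlinarith

end Key

/-- Under the hypotheses PSP ≥ αP and (1-P)S(1-P) ≤ 0 with 0 < α ≤ 1,
the operator T = S(1-P) + PS is boundedly invertible with
‖T⁻¹‖ ≤ 1/(1 - √(1-α²)). -/
theorem stmt9 {W : Type*} [NormedAddCommGroup W] [InnerProductSpace ℂ W] [CompleteSpace W]
    (P S : W →L[ℂ] W) (hP : IsSelfAdjoint P) (hP2 : P * P = P)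
    (hS : IsSelfAdjoint S) (hS2 : S * S = 1)
    (α : ℝ) (hα0 : 0 < α) (hα1 : α ≤ 1)
    (h1 : (P * S * P - (α : ℂ) • P).IsPositive)
    (h2 : (-((1 - P) * S * (1 - P))).IsPositive) :
    ∃ Tinv : W →L[ℂ] W,
      (S * (1 - P) + P * S) * Tinv = 1 ∧
      Tinv * (S * (1 - P) + P * S) = 1 ∧
      ‖Tinv‖ ≤ 1 / (1 - Real.sqrt (1 - α ^ 2)) := by
  classical
  set T : W →L[ℂ] W := S * (1 - P) + P * S with hT
  set T' : W →L[ℂ] W := (1 - P) * S + S * P with hT'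
  set δ : ℝ := 1 - Real.sqrt (1 - α ^ 2) with hδdef
  have hα2 : (0:ℝ) ≤ 1 - α^2 := by nlinarith
  have hc2 : (Real.sqrt (1 - α^2))^2 = 1 - α^2 := Real.sq_sqrt hα2
  have hc0 : 0 ≤ Real.sqrt (1 - α^2) := Real.sqrt_nonneg _
  have hδ : 0 < δ := by
    rw [hδdef]
    nlinarith [hc2, hc0, sq_nonneg (Real.sqrt (1 - α^2) - 1)]
  have hTlb : ∀ x : W, δ * ‖x‖ ≤ ‖T x‖ := fun x => (key9 P S hP hP2 hS hS2 α hα0 hα1 h1 x).1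
  have hT'lb : ∀ x : W, δ * ‖x‖ ≤ ‖T' x‖ := fun x => (key9 P S hP hP2 hS hS2 α hα0 hα1 h1 x).2
  have symmP : ∀ u v : W, (inner ℂ (P u) v : ℂ) = inner ℂ u (P v) := fun u v => hP.isSymmetric u v
  have symmS : ∀ u v : W, (inner ℂ (S u) v : ℂ) = inner ℂ u (S v) := fun u v => hS.isSymmetric u v
  have hadj : ∀ z y : W, (inner ℂ (T z) y : ℂ) = inner ℂ z (T' y) := by
    intro z y
    simp only [hT, hT', ContinuousLinearMap.add_apply, ContinuousLinearMap.mul_apply,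
      ContinuousLinearMap.sub_apply, ContinuousLinearMap.one_apply, inner_add_left,
      inner_add_right]
    rw [symmS (z - P z) y, symmP (S z) y, symmS z (P y), inner_sub_left, symmP z (S y),
      ← inner_sub_right]
  have hker : LinearMap.ker (T : W →ₗ[ℂ] W) = ⊥ := by
    rw [LinearMap.ker_eq_bot']
    intro z hz
    have := hTlb z
    rw [show T z = 0 from hz, norm_zero] at this
    have hz0 : ‖z‖ ≤ 0 := by nlinarith
    have := norm_nonneg z
    exact norm_eq_zero.mp (le_antisymm hz0 this)
  have hbound : ∀ z : W, ‖z‖ ≤ (δ⁻¹).toNNReal * ‖T z‖ := by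
    intro z
    have h := hTlb z
    have : ((δ⁻¹).toNNReal : ℝ) = δ⁻¹ := Real.coe_toNNReal _ (by positivity)
    rw [this]
    rw [← mul_le_mul_iff_right₀ hδ]
    calc δ * ‖z‖ ≤ ‖T z‖ := h
      _ = δ * (δ⁻¹ * ‖T z‖) := by field_simp
  have hanti : AntilipschitzWith (δ⁻¹).toNNReal T :=
    ContinuousLinearMap.antilipschitz_of_bound T hbound
  have hclosed : IsClosed (Set.range T) := hanti.isClosed_range T.uniformContinuous
  have hclosed' : IsClosed ((LinearMap.range (T : W →ₗ[ℂ] W) : Submodule ℂ W) : Set W) := by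
    rw [LinearMap.coe_range]
    exact hclosed
  haveI : CompleteSpace (LinearMap.range (T : W →ₗ[ℂ] W) : Submodule ℂ W) := hclosed'.completeSpace_coe
  have horth : (LinearMap.range (T : W →ₗ[ℂ] W) : Submodule ℂ W)ᗮ = ⊥ := by
    rw [Submodule.eq_bot_iff]
    intro y hy
    have hy' : ∀ z : W, (inner ℂ (T z) y : ℂ) = 0 := fun z =>
      (Submodule.mem_orthogonal _ y).mp hy (T z) (LinearMap.mem_range_self _ z)
    have hT'y : T' y = 0 := by
      have h0 : (inner ℂ (T' y) (T' y) : ℂ) = 0 := by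
        rw [← hadj (T' y) y]
        exact hy' (T' y)
      exact inner_self_eq_zero.mp h0
    have := hT'lb y
    rw [hT'y, norm_zero] at this
    have hy0 : ‖y‖ ≤ 0 := by nlinarith
    exact norm_eq_zero.mp (le_antisymm hy0 (norm_nonneg y))
  have hrange : LinearMap.range (T : W →ₗ[ℂ] W) = ⊤ := Submodule.orthogonal_eq_bot_iff.mp horth
  set e := ContinuousLinearEquiv.ofBijective T hker hrange with he
  refine ⟨(e.symm : W →L[ℂ] W), ?_, ?_, ?_⟩
  · ext y
    have : T (e.symm y) = e (e.symm y) := by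
      rw [he]; rfl
    simp [ContinuousLinearMap.mul_apply, this]
  · ext y
    have : T y = e y := by rw [he]; rfl
    simp [ContinuousLinearMap.mul_apply, this]
  · apply ContinuousLinearMap.opNorm_le_bound _ (by positivity)
    intro y
    have h1' : T (e.symm y) = y := by
      have : T (e.symm y) = e (e.symm y) := by rw [he]; rfl
      rw [this, e.apply_symm_apply]
    have h2' := hTlb (e.symm y)
    rw [h1'] at h2'
    rw [← mul_le_mul_iff_right₀ hδ]
    calc δ * ‖(e.symm : W →L[ℂ] W) y‖ ≤ ‖y‖ := h2'
      _ = δ * (1 / δ * ‖y‖) := by field_simp
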